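/- Let B_j(λ) be a unitary on j qubits such that B_j(λ)|0⟩|1⟩^{⊗(j-1)} = (|0⟩|1⟩^{⊗(j-1)} + e^{-iλ}|1⟩|0⟩^{⊗(j-1)})/√2 and B_j(λ)|1⟩|1⟩^{⊗(j-1)} = (|0⟩|1⟩^{⊗(j-1)} − e^{-iλ}|1⟩|0⟩^{⊗(j-1)})/√2. Then exp(iγτ(e^{iλ} s_j^- + e^{-iλ} s_j^+)) restricted to the last j qubit factors equals B_j(λ) · CRZ_j^{1,...,j-1}(−2γτ) · B_j(λ)†, where CRZ is the multi-controlled RZ gate exp(−iθ Z_j/2) ⊗ |1⟩⟨1|^{⊗(j-1)} + I ⊗ (I^{⊗(j-1)} − |1⟩⟨1|^{⊗(j-1)}) with θ = −2γτ. -/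

import Mathlib

open Matrix Complex
open scoped Matrix.Norms.L2Operator Kronecker

noncomputable section

/-- Kronecker product realized on `Fin (a*b)`, first factor most significant. -/
def kron {a b : ℕ} (A : Matrix (Fin a) (Fin a) ℂ) (B : Matrix (Fin b) (Fin b) ℂ) :
    Matrix (Fin (a * b)) (Fin (a * b)) ℂ :=
  Matrix.reindex finProdFinEquiv finProdFinEquiv (Matrix.kroneckerMap (· * ·) A B)

def castM {a b : ℕ} (h : a = b) (A : Matrix (Fin a) (Fin a) ℂ) : Matrix (Fin b) (Fin b) ℂ :=
  Matrix.reindex (finCongr h) (finCongr h) A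

def tpow (A : Matrix (Fin 2) (Fin 2) ℂ) : (k : ℕ) → Matrix (Fin (2 ^ k)) (Fin (2 ^ k)) ℂ
  | 0 => 1
  | k + 1 => castM (pow_succ' 2 k).symm (kron A (tpow A k))

/-- `σ01 = |0⟩⟨1|`. -/
def sig01 : Matrix (Fin 2) (Fin 2) ℂ := Matrix.single 0 1 1

/-- `σ10 = |1⟩⟨0|`. -/
def sig10 : Matrix (Fin 2) (Fin 2) ℂ := Matrix.single 1 0 1

lemma sterm_size (n : ℕ) (j : Fin n) : 2 ^ (n - (j.1 + 1)) * (2 * 2 ^ j.1) = 2 ^ n := by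
  rw [← pow_succ', ← pow_add]
  congr 1
  have hj := j.2
  omega

/-- `s_j^- = I^{⊗(n-j)} ⊗ σ01 ⊗ σ10^{⊗(j-1)}` on `n` qubits (paper index `j.1 + 1`). -/
def sTerm (n : ℕ) (j : Fin n) : Matrix (Fin (2 ^ n)) (Fin (2 ^ n)) ℂ :=
  castM (sterm_size n j) (kron (tpow 1 (n - (j.1 + 1))) (kron sig01 (tpow sig10 j.1)))

lemma idx_b (j : ℕ) (hj : 1 ≤ j) : 2 ^ (j - 1) < 2 ^ j :=
  Nat.pow_lt_pow_right one_lt_two (by omega)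

lemma idx_a (j : ℕ) (hj : 1 ≤ j) : 2 ^ (j - 1) - 1 < 2 ^ j :=
  lt_of_le_of_lt (Nat.sub_le _ _) (idx_b j hj)

lemma idx_c (j : ℕ) : 2 ^ j - 1 < 2 ^ j := by
  have h : 0 < 2 ^ j := by positivity
  omega

lemma split_size (j : ℕ) (hj : 1 ≤ j) : 2 * 2 ^ (j - 1) = 2 ^ j := by
  rw [← pow_succ']
  congr 1
  omega

/-- `s_j^- = σ01 ⊗ σ10^{⊗(j-1)}` on `j` qubits. -/
def sjm (j : ℕ) (hj : 1 ≤ j) : Matrix (Fin (2 ^ j)) (Fin (2 ^ j)) ℂ :=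
  castM (split_size j hj) (kron sig01 (tpow sig10 (j - 1)))

/-- Pauli `Z`. -/
def Zmat : Matrix (Fin 2) (Fin 2) ℂ := !![1, 0; 0, (-1 : ℂ)]

/-- `RZ(θ) = exp(−iθZ/2)`. -/
def RZ (θ : ℝ) : Matrix (Fin 2) (Fin 2) ℂ :=
  NormedSpace.exp ((-(θ / 2 : ℂ) * Complex.I) • Zmat)

/-- `|1⟩⟨1|^{⊗k}`. -/
def projOnes (k : ℕ) : Matrix (Fin (2 ^ k)) (Fin (2 ^ k)) ℂ :=
  tpow (Matrix.single 1 1 1) k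

/-- Multi-controlled RZ gate
`exp(−iθZ/2) ⊗ |1⟩⟨1|^{⊗(j-1)} + I ⊗ (I^{⊗(j-1)} − |1⟩⟨1|^{⊗(j-1)})` on `j` qubits. -/
def CRZ (j : ℕ) (hj : 1 ≤ j) (θ : ℝ) : Matrix (Fin (2 ^ j)) (Fin (2 ^ j)) ℂ :=
  castM (split_size j hj)
    (kron (RZ θ) (projOnes (j - 1)) + kron 1 (tpow 1 (j - 1) - projOnes (j - 1)))

section Helpers

open Matrix

lemma castM_apply {a b : ℕ} (h : a = b) (A : Matrix (Fin a) (Fin a) ℂ) (p q : Fin b) :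
    castM h A p q = A (finCongr h.symm p) (finCongr h.symm q) := rfl

lemma castM_add {a b : ℕ} (h : a = b) (A B : Matrix (Fin a) (Fin a) ℂ) :
    castM h (A + B) = castM h A + castM h B := by
  ext p q; simp [castM_apply]

lemma castM_sub {a b : ℕ} (h : a = b) (A B : Matrix (Fin a) (Fin a) ℂ) :
    castM h (A - B) = castM h A - castM h B := by
  ext p q; simp [castM_apply]

lemma castM_smul {a b : ℕ} (h : a = b) (c : ℂ) (A : Matrix (Fin a) (Fin a) ℂ) :
    castM h (c • A) = c • castM h A := by
  ext p q; simp [castM_apply]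

lemma castM_one {a b : ℕ} (h : a = b) : castM h (1 : Matrix (Fin a) (Fin a) ℂ) = 1 := by
  ext p q
  simp [castM_apply, Matrix.one_apply, Fin.ext_iff]

lemma castM_std {a b : ℕ} (h : a = b) (i j : Fin a) (c : ℂ) :
    castM h (Matrix.single i j c) =
      Matrix.single (finCongr h i) (finCongr h j) c := by
  ext p q
  simp [castM_apply, Matrix.single, Fin.ext_iff]

lemma kron_std {m n : ℕ} (i₁ j₁ : Fin m) (i₂ j₂ : Fin n) (c d : ℂ) :
    kron (Matrix.single i₁ j₁ c) (Matrix.single i₂ j₂ d) =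
      Matrix.single (finProdFinEquiv (i₁, i₂)) (finProdFinEquiv (j₁, j₂)) (c * d) := by
  ext p q
  obtain ⟨⟨p1, p2⟩, rfl⟩ := finProdFinEquiv.surjective p
  obtain ⟨⟨q1, q2⟩, rfl⟩ := finProdFinEquiv.surjective q
  simp only [kron, Matrix.reindex_apply, Matrix.submatrix_apply, Equiv.symm_apply_apply,
    Matrix.kroneckerMap_apply, Matrix.single, Matrix.of_apply,
    Equiv.apply_eq_iff_eq, Prod.mk.injEq]
  by_cases h1 : i₁ = p1 <;> by_cases h2 : j₁ = q1 <;> by_cases h3 : i₂ = p2 <;>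
    by_cases h4 : j₂ = q2 <;> simp [h1, h2, h3, h4, Prod.ext_iff]

lemma kron_add_left {m n : ℕ} (A B : Matrix (Fin m) (Fin m) ℂ) (C : Matrix (Fin n) (Fin n) ℂ) :
    kron (A + B) C = kron A C + kron B C := by
  ext p q; simp [kron, add_mul]

lemma kron_add_right {m n : ℕ} (A : Matrix (Fin m) (Fin m) ℂ) (B C : Matrix (Fin n) (Fin n) ℂ) :
    kron A (B + C) = kron A B + kron A C := by
  ext p q; simp [kron, mul_add]

lemma kron_sub_right {m n : ℕ} (A : Matrix (Fin m) (Fin m) ℂ) (B C : Matrix (Fin n) (Fin n) ℂ) :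
    kron A (B - C) = kron A B - kron A C := by
  ext p q; simp [kron, mul_sub]

lemma kron_smul_left {m n : ℕ} (c : ℂ) (A : Matrix (Fin m) (Fin m) ℂ)
    (B : Matrix (Fin n) (Fin n) ℂ) : kron (c • A) B = c • kron A B := by
  ext p q; simp [kron, mul_assoc]

lemma kron_one_one {m n : ℕ} :
    kron (1 : Matrix (Fin m) (Fin m) ℂ) (1 : Matrix (Fin n) (Fin n) ℂ) = 1 := by
  ext p q
  obtain ⟨⟨p1, p2⟩, rfl⟩ := finProdFinEquiv.surjective p
  obtain ⟨⟨q1, q2⟩, rfl⟩ := finProdFinEquiv.surjective q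
  simp only [kron, Matrix.reindex_apply, Matrix.submatrix_apply, Equiv.symm_apply_apply,
    Matrix.kroneckerMap_apply, Matrix.one_apply, Equiv.apply_eq_iff_eq, Prod.mk.injEq]
  by_cases h1 : p1 = q1 <;> by_cases h2 : p2 = q2 <;> simp [h1, h2]

lemma std_eq {n : ℕ} {i j i' j' : Fin n} (hi : i.val = i'.val) (hj : j.val = j'.val)
    (c d : ℂ) (hc : c = d) :
    Matrix.single i j c = Matrix.single i' j' d := by
  obtain rfl : i = i' := Fin.ext hi
  obtain rfl : j = j' := Fin.ext hj
  rw [hc]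

lemma pow_pos' (k : ℕ) : 0 < 2 ^ k := Nat.pow_pos (n := k) (by norm_num)

lemma tpow_one_eq (k : ℕ) : tpow 1 k = 1 := by
  induction k with
  | zero => rfl
  | succ k ih => rw [tpow, ih, kron_one_one, castM_one]

lemma tpow_sig10_eq (k : ℕ) :
    tpow sig10 k = Matrix.single ⟨2 ^ k - 1, idx_c k⟩ ⟨0, pow_pos' k⟩ 1 := by
  induction k with
  | zero =>
    ext p q
    have hp : p = ⟨0, pow_pos' 0⟩ := by omega
    have hq : q = ⟨0, pow_pos' 0⟩ := by omega
    subst hp; subst hq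
    simp [tpow, Matrix.one_apply, Matrix.single]
  | succ k ih =>
    rw [tpow, ih, sig10, kron_std, castM_std]
    apply std_eq _ _ _ _ (mul_one 1) <;>
      simp [finProdFinEquiv] <;>
      (have h1 := pow_pos' k; have h2 : (2 : ℕ) ^ (k + 1) = 2 ^ k * 2 := pow_succ 2 k; omega)

lemma projOnes_eq (k : ℕ) :
    projOnes k = Matrix.single ⟨2 ^ k - 1, idx_c k⟩ ⟨2 ^ k - 1, idx_c k⟩ 1 := by
  induction k with
  | zero =>
    ext p q
    have hp : p = ⟨0, pow_pos' 0⟩ := by omega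
    have hq : q = ⟨0, pow_pos' 0⟩ := by omega
    subst hp; subst hq
    simp [projOnes, tpow, Matrix.one_apply, Matrix.single]
  | succ k ih =>
    rw [projOnes, tpow, show tpow (Matrix.single 1 1 1) k = projOnes k from rfl, ih,
      kron_std, castM_std]
    apply std_eq _ _ _ _ (mul_one 1) <;>
      simp [finProdFinEquiv] <;>
      (have h1 := pow_pos' k; have h2 : (2 : ℕ) ^ (k + 1) = 2 ^ k * 2 := pow_succ 2 k; omega)

lemma sjm_eq (j : ℕ) (hj : 1 ≤ j) :
    sjm j hj = Matrix.single ⟨2 ^ (j - 1) - 1, idx_a j hj⟩ ⟨2 ^ (j - 1), idx_b j hj⟩ 1 := by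
  rw [sjm, sig01, tpow_sig10_eq, kron_std, castM_std]
  apply std_eq _ _ _ _ (mul_one 1) <;> simp [finProdFinEquiv]

lemma std_conjTranspose {n : ℕ} (a b : Fin n) :
    (Matrix.single a b (1 : ℂ))ᴴ = Matrix.single b a 1 := by
  ext p q
  simp [Matrix.conjTranspose_apply, Matrix.single, and_comm]

lemma exp_shift_sum (c : ℂ) :
    ∑' k : ℕ, c ^ (k + 1) * ((Nat.factorial (k + 1) : ℂ))⁻¹ = Complex.exp c - 1 := by
  have hsum : Summable fun k : ℕ => ((Nat.factorial k : ℂ))⁻¹ • c ^ k :=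
    NormedSpace.expSeries_summable' (𝕂 := ℂ) c
  have h1 : Complex.exp c = ∑' k : ℕ, ((Nat.factorial k : ℂ))⁻¹ • c ^ k := by
    rw [Complex.exp_eq_exp_ℂ, NormedSpace.exp_eq_tsum ℂ]
  rw [h1, Summable.tsum_eq_zero_add hsum]
  simp [smul_eq_mul, mul_comm]

lemma exp_idem {n : ℕ} (S : Matrix (Fin n) (Fin n) ℂ) (h : S * S = S) (c : ℂ) :
    NormedSpace.exp (c • S) = 1 + (Complex.exp c - 1) • S := by
  have hpow : ∀ k : ℕ, S ^ (k + 1) = S := by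
    intro k
    induction k with
    | zero => simp
    | succ k ih => rw [pow_succ, ih, h]
  have hsum : Summable fun k : ℕ => ((Nat.factorial k : ℂ))⁻¹ • (c • S) ^ k :=
    NormedSpace.expSeries_summable' (𝕂 := ℂ) (c • S)
  have hscal : Summable fun k : ℕ => c ^ (k + 1) * ((Nat.factorial (k + 1) : ℂ))⁻¹ := by
    have h2 : Summable fun k : ℕ => ((Nat.factorial k : ℂ))⁻¹ • c ^ k :=
      NormedSpace.expSeries_summable' (𝕂 := ℂ) c
    have h3 := (summable_nat_add_iff 1).mpr h2
    apply h3.congr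
    intro k
    simp [smul_eq_mul, mul_comm]
  simp only [NormedSpace.exp_eq_tsum ℂ]
  rw [Summable.tsum_eq_zero_add hsum]
  have hterm : ∀ k : ℕ,
      ((Nat.factorial (k + 1) : ℂ))⁻¹ • (c • S) ^ (k + 1) = (c ^ (k + 1) * ((Nat.factorial (k + 1) : ℂ))⁻¹) • S := by
    intro k
    rw [smul_pow, hpow, smul_smul, mul_comm]
  rw [tsum_congr hterm, Summable.tsum_smul_const hscal, exp_shift_sum]
  simp

lemma exp_two_idem {n : ℕ} (S T : Matrix (Fin n) (Fin n) ℂ)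
    (hS : S * S = S) (hT : T * T = T) (hST : S * T = 0) (hTS : T * S = 0) (c d : ℂ) :
    NormedSpace.exp (c • S + d • T) =
      1 + (Complex.exp c - 1) • S + (Complex.exp d - 1) • T := by
  have hcomm : Commute (c • S) (d • T) := by
    unfold Commute SemiconjBy
    rw [Algebra.smul_mul_assoc, Algebra.mul_smul_comm, Algebra.smul_mul_assoc,
      Algebra.mul_smul_comm, hST, hTS]
    simp
  rw [Matrix.exp_add_of_commute _ _ hcomm, exp_idem S hS, exp_idem T hT]
  rw [add_mul, one_mul, mul_add, mul_one, Algebra.smul_mul_assoc, Algebra.mul_smul_comm, hST]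
  simp only [smul_zero, add_zero]
  abel

lemma conj_std_entry {n : ℕ} (B : Matrix (Fin n) (Fin n) ℂ) (x y p q : Fin n) :
    (B * Matrix.single x y (1 : ℂ) * Bᴴ) p q
      = B.mulVec (Pi.single x 1) p * star (B.mulVec (Pi.single y 1) q) := by
  simp only [Matrix.mulVec_single, Pi.smul_apply, Matrix.col_apply, op_smul_eq_mul]
  simp only [mul_one]
  rw [Matrix.mul_apply]
  simp only [Matrix.mul_apply, Matrix.conjTranspose_apply, Matrix.single,
    Matrix.of_apply]
  simp [ite_and, mul_ite, ite_mul, Finset.sum_ite_eq, Finset.sum_ite_eq']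

lemma one2_eq : (1 : Matrix (Fin 2) (Fin 2) ℂ)
    = Matrix.single 0 0 (1 : ℂ) + Matrix.single 1 1 (1 : ℂ) := by
  ext p q
  fin_cases p <;> fin_cases q <;> simp [Matrix.one_apply, Matrix.single]

lemma Zmat_eq : Zmat = 1 - (2 : ℂ) • Matrix.single 1 1 (1 : ℂ) := by
  ext p q
  fin_cases p <;> fin_cases q <;>
    simp [Zmat, Matrix.one_apply, Matrix.single] <;> norm_num

lemma RZ_eq (θ : ℝ) :
    RZ θ = Complex.exp (-(θ / 2 : ℂ) * Complex.I) • Matrix.single 0 0 (1 : ℂ) +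
      Complex.exp (-(-(θ / 2 : ℂ) * Complex.I)) • Matrix.single 1 1 (1 : ℂ) := by
  set w : ℂ := -(θ / 2 : ℂ) * Complex.I with hw
  have hdecomp : w • Zmat = w • (1 : Matrix (Fin 2) (Fin 2) ℂ) +
      (-2 * w) • Matrix.single 1 1 (1 : ℂ) := by
    rw [Zmat_eq]; module
  have hone : (1 : Matrix (Fin 2) (Fin 2) ℂ) * 1 = 1 := one_mul 1
  have hE : Matrix.single (1 : Fin 2) (1 : Fin 2) (1 : ℂ) *
        Matrix.single (1 : Fin 2) (1 : Fin 2) (1 : ℂ)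
      = Matrix.single (1 : Fin 2) (1 : Fin 2) (1 : ℂ) := by
    rw [Matrix.single_mul_single_same, mul_one]
  have hcomm : Commute (w • (1 : Matrix (Fin 2) (Fin 2) ℂ))
      ((-2 * w) • Matrix.single (1 : Fin 2) (1 : Fin 2) (1 : ℂ)) :=
    ((Commute.one_left _).smul_left w).smul_right (-2 * w)
  have hmul : Complex.exp w * Complex.exp (-2 * w) = Complex.exp (-w) := by
    rw [← Complex.exp_add]; congr 1; ring
  have hmul' : Complex.exp w * Complex.exp (-(2 * w)) = Complex.exp (-w) := by
    rw [← Complex.exp_add]; congr 1; ring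
  have hRZ : RZ θ = NormedSpace.exp (w • Zmat) := rfl
  rw [hRZ, hdecomp, Matrix.exp_add_of_commute _ _ hcomm, exp_idem _ hone, exp_idem _ hE]
  ext p q
  fin_cases p <;> fin_cases q <;>
    simp [Matrix.mul_apply, Matrix.one_apply, Matrix.single, Fin.sum_univ_succ] <;>
    first | linear_combination hmul | linear_combination hmul' 

lemma CRZ_eq (j : ℕ) (hj : 1 ≤ j) (θ : ℝ) :
    CRZ j hj θ = 1 +
      (Complex.exp (-(θ / 2 : ℂ) * Complex.I) - 1) •
        Matrix.single ⟨2 ^ (j - 1) - 1, idx_a j hj⟩ ⟨2 ^ (j - 1) - 1, idx_a j hj⟩ 1 +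
      (Complex.exp (-(-(θ / 2 : ℂ) * Complex.I)) - 1) •
        Matrix.single ⟨2 ^ j - 1, idx_c j⟩ ⟨2 ^ j - 1, idx_c j⟩ 1 := by
  have hsplit : (2 : ℕ) ^ j = 2 * 2 ^ (j - 1) := (split_size j hj).symm
  have hpos := pow_pos' (j - 1)
  have h00 : castM (split_size j hj)
      (kron (Matrix.single (0 : Fin 2) 0 1) (projOnes (j - 1))) =
      Matrix.single ⟨2 ^ (j - 1) - 1, idx_a j hj⟩ ⟨2 ^ (j - 1) - 1, idx_a j hj⟩ 1 := by
    rw [projOnes_eq, kron_std, castM_std]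
    apply std_eq _ _ _ _ (mul_one 1) <;> simp [finProdFinEquiv]
  have h11 : castM (split_size j hj)
      (kron (Matrix.single (1 : Fin 2) 1 1) (projOnes (j - 1))) =
      Matrix.single ⟨2 ^ j - 1, idx_c j⟩ ⟨2 ^ j - 1, idx_c j⟩ 1 := by
    rw [projOnes_eq, kron_std, castM_std]
    apply std_eq _ _ _ _ (mul_one 1) <;> simp [finProdFinEquiv] <;> omega
  have hQ1 : kron (1 : Matrix (Fin 2) (Fin 2) ℂ) (projOnes (j - 1)) =
      kron (Matrix.single 0 0 (1 : ℂ)) (projOnes (j - 1)) +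
      kron (Matrix.single 1 1 (1 : ℂ)) (projOnes (j - 1)) := by
    rw [← kron_add_left, ← one2_eq]
  rw [CRZ, RZ_eq, tpow_one_eq, kron_sub_right, kron_one_one, kron_add_left,
    kron_smul_left, kron_smul_left, hQ1]
  rw [castM_add, castM_add, castM_smul, castM_smul, castM_sub, castM_one, castM_add,
    h00, h11]
  module

lemma exp_M {n : ℕ} (a b : Fin n) (hab : a ≠ b) (α β c : ℂ) (hαβ : α * β = 1) :
    NormedSpace.exp
        (c • (α • Matrix.single a b (1 : ℂ) + β • Matrix.single b a (1 : ℂ))) =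
      1 + (Complex.exp c - 1) •
          ((2⁻¹ : ℂ) • (Matrix.single a a (1 : ℂ) + Matrix.single b b (1 : ℂ) +
            α • Matrix.single a b (1 : ℂ) + β • Matrix.single b a (1 : ℂ))) +
        (Complex.exp (-c) - 1) •
          ((2⁻¹ : ℂ) • (Matrix.single a a (1 : ℂ) + Matrix.single b b (1 : ℂ) -
            α • Matrix.single a b (1 : ℂ) - β • Matrix.single b a (1 : ℂ))) := by
  have hba : b ≠ a := hab.symm
  have hz1 : ∀ (x y : Fin n) (u v : ℂ),
      Matrix.single x a u * Matrix.single b y v = 0 := fun x y u v =>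
    Matrix.single_mul_single_of_ne u x a b hab v
  have hz2 : ∀ (x y : Fin n) (u v : ℂ),
      Matrix.single x b u * Matrix.single a y v = 0 := fun x y u v =>
    Matrix.single_mul_single_of_ne u x b a hba v
  set S : Matrix (Fin n) (Fin n) ℂ :=
    (2⁻¹ : ℂ) • (Matrix.single a a (1 : ℂ) + Matrix.single b b (1 : ℂ) +
      α • Matrix.single a b (1 : ℂ) + β • Matrix.single b a (1 : ℂ)) with hSdef
  set T : Matrix (Fin n) (Fin n) ℂ :=
    (2⁻¹ : ℂ) • (Matrix.single a a (1 : ℂ) + Matrix.single b b (1 : ℂ) -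
      α • Matrix.single a b (1 : ℂ) - β • Matrix.single b a (1 : ℂ)) with hTdef
  have key : ∀ s t : ℂ, s * t = 1 →
      ((2⁻¹ : ℂ) • (Matrix.single a a (1 : ℂ) + Matrix.single b b (1 : ℂ) +
        s • Matrix.single a b (1 : ℂ) + t • Matrix.single b a (1 : ℂ))) *
      ((2⁻¹ : ℂ) • (Matrix.single a a (1 : ℂ) + Matrix.single b b (1 : ℂ) +
        α • Matrix.single a b (1 : ℂ) + β • Matrix.single b a (1 : ℂ))) = 0 ∨ True := by
    intro s t hst; right; trivial
  have hSS : S * S = S := by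
    rw [hSdef]
    simp only [Matrix.smul_mul, Matrix.mul_smul, Matrix.add_mul, Matrix.mul_add,
      Matrix.sub_mul, Matrix.mul_sub, Matrix.single_mul_single_same,
      hz1, hz2,
      smul_zero, mul_one, smul_add, smul_sub, smul_smul]
    match_scalars <;>
      first
        | ring1
        | linear_combination (4⁻¹ : ℂ) * hαβ
        | linear_combination (-(4⁻¹) : ℂ) * hαβ
        | linear_combination (2⁻¹ : ℂ) * hαβ
        | linear_combination (-(2⁻¹) : ℂ) * hαβ
        | linear_combination ((4⁻¹ : ℂ) * α) * hαβ
        | linear_combination ((4⁻¹ : ℂ) * β) * hαβ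
        | linear_combination (-(4⁻¹ : ℂ) * α) * hαβ
        | linear_combination (-(4⁻¹ : ℂ) * β) * hαβ
  have hTT : T * T = T := by
    rw [hTdef]
    simp only [Matrix.smul_mul, Matrix.mul_smul, Matrix.add_mul, Matrix.mul_add,
      Matrix.sub_mul, Matrix.mul_sub, Matrix.single_mul_single_same,
      hz1, hz2,
      smul_zero, mul_one, smul_add, smul_sub, smul_smul]
    match_scalars <;>
      first
        | ring1
        | linear_combination (4⁻¹ : ℂ) * hαβ
        | linear_combination (-(4⁻¹) : ℂ) * hαβ
        | linear_combination (2⁻¹ : ℂ) * hαβ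
        | linear_combination (-(2⁻¹) : ℂ) * hαβ
        | linear_combination ((4⁻¹ : ℂ) * α) * hαβ
        | linear_combination ((4⁻¹ : ℂ) * β) * hαβ
        | linear_combination (-(4⁻¹ : ℂ) * α) * hαβ
        | linear_combination (-(4⁻¹ : ℂ) * β) * hαβ
  have hST : S * T = 0 := by
    rw [hSdef, hTdef]
    simp only [Matrix.smul_mul, Matrix.mul_smul, Matrix.add_mul, Matrix.mul_add,
      Matrix.sub_mul, Matrix.mul_sub, Matrix.single_mul_single_same,
      hz1, hz2,
      smul_zero, mul_one, smul_add, smul_sub, smul_smul]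
    match_scalars <;>
      first
        | ring1
        | linear_combination (4⁻¹ : ℂ) * hαβ
        | linear_combination (-(4⁻¹) : ℂ) * hαβ
        | linear_combination (2⁻¹ : ℂ) * hαβ
        | linear_combination (-(2⁻¹) : ℂ) * hαβ
        | linear_combination ((4⁻¹ : ℂ) * α) * hαβ
        | linear_combination ((4⁻¹ : ℂ) * β) * hαβ
        | linear_combination (-(4⁻¹ : ℂ) * α) * hαβ
        | linear_combination (-(4⁻¹ : ℂ) * β) * hαβ
  have hTS : T * S = 0 := by
    rw [hSdef, hTdef]
    simp only [Matrix.smul_mul, Matrix.mul_smul, Matrix.add_mul, Matrix.mul_add,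
      Matrix.sub_mul, Matrix.mul_sub, Matrix.single_mul_single_same,
      hz1, hz2,
      smul_zero, mul_one, smul_add, smul_sub, smul_smul]
    match_scalars <;>
      first
        | ring1
        | linear_combination (4⁻¹ : ℂ) * hαβ
        | linear_combination (-(4⁻¹) : ℂ) * hαβ
        | linear_combination (2⁻¹ : ℂ) * hαβ
        | linear_combination (-(2⁻¹) : ℂ) * hαβ
        | linear_combination ((4⁻¹ : ℂ) * α) * hαβ
        | linear_combination ((4⁻¹ : ℂ) * β) * hαβ
        | linear_combination (-(4⁻¹ : ℂ) * α) * hαβ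
        | linear_combination (-(4⁻¹ : ℂ) * β) * hαβ
  have hM : c • (α • Matrix.single a b (1 : ℂ) + β • Matrix.single b a (1 : ℂ))
      = c • S + (-c) • T := by
    rw [hSdef, hTdef]; module
  rw [hM, exp_two_idem S T hSS hTT hST hTS]

lemma conj_expand {n : ℕ} (B E1 E2 : Matrix (Fin n) (Fin n) ℂ) (x y : ℂ) :
    B * (1 + x • E1 + y • E2) * Bᴴ
      = B * Bᴴ + x • (B * E1 * Bᴴ) + y • (B * E2 * Bᴴ) := by
  rw [Matrix.mul_add, Matrix.mul_add, Matrix.mul_one, Matrix.add_mul, Matrix.add_mul,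
    Matrix.mul_smul, Matrix.mul_smul, Matrix.smul_mul, Matrix.smul_mul, Matrix.mul_assoc,
    Matrix.mul_assoc]

lemma vmv_single {n : ℕ} (a b : Fin n) :
    Matrix.vecMulVec (Pi.single a (1 : ℂ)) (Pi.single b (1 : ℂ))
      = Matrix.single a b (1 : ℂ) := by
  ext p q
  simp only [Matrix.vecMulVec_apply, Pi.single_apply, Matrix.single, Matrix.of_apply,
    ite_and, mul_ite, mul_one, mul_zero, ite_mul, one_mul, zero_mul]
  by_cases h1 : a = p <;> by_cases h2 : b = q <;> simp [h1, h2, eq_comm]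

lemma vmv_add_left {n : ℕ} (x y z : Fin n → ℂ) :
    Matrix.vecMulVec (x + y) z = Matrix.vecMulVec x z + Matrix.vecMulVec y z := by
  ext p q; simp [Matrix.vecMulVec_apply, add_mul]

lemma vmv_add_right {n : ℕ} (x y z : Fin n → ℂ) :
    Matrix.vecMulVec x (y + z) = Matrix.vecMulVec x y + Matrix.vecMulVec x z := by
  ext p q; simp [Matrix.vecMulVec_apply, mul_add]

lemma vmv_smul_left {n : ℕ} (c : ℂ) (x z : Fin n → ℂ) :
    Matrix.vecMulVec (c • x) z = c • Matrix.vecMulVec x z := by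
  ext p q; simp [Matrix.vecMulVec_apply, mul_assoc]

lemma vmv_smul_right {n : ℕ} (c : ℂ) (x z : Fin n → ℂ) :
    Matrix.vecMulVec x (c • z) = c • Matrix.vecMulVec x z := by
  ext p q; simp [Matrix.vecMulVec_apply]; ring

lemma conj_vmv {n : ℕ} (B : Matrix (Fin n) (Fin n) ℂ) (x y : Fin n) :
    B * Matrix.single x y (1 : ℂ) * Bᴴ
      = Matrix.vecMulVec (B.mulVec (Pi.single x 1)) (star (B.mulVec (Pi.single y 1))) := by
  ext p q
  rw [conj_std_entry]
  rfl

end Helpers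

/-- Bell-basis conjugation identity:
`exp(iγτ(e^{iλ} s_j^- + e^{-iλ} s_j^+)) = B_j(λ) CRZ_j(−2γτ) B_j(λ)†`. -/
theorem stmt_7 (j : ℕ) (hj : 1 ≤ j) (γ lam τ : ℝ)
    (B : Matrix (Fin (2 ^ j)) (Fin (2 ^ j)) ℂ)
    (hB : B ∈ Matrix.unitaryGroup (Fin (2 ^ j)) ℂ)
    (hB0 : B.mulVec ((Pi.single (⟨2 ^ (j - 1) - 1, idx_a j hj⟩ : Fin (2 ^ j)) 1 : Fin (2 ^ j) → ℂ)) =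
      ((Real.sqrt 2 : ℂ))⁻¹ • ((Pi.single (⟨2 ^ (j - 1) - 1, idx_a j hj⟩ : Fin (2 ^ j)) 1 : Fin (2 ^ j) → ℂ) +
        Complex.exp (-(Complex.I * lam)) • (Pi.single (⟨2 ^ (j - 1), idx_b j hj⟩ : Fin (2 ^ j)) 1 : Fin (2 ^ j) → ℂ)))
    (hB1 : B.mulVec ((Pi.single (⟨2 ^ j - 1, idx_c j⟩ : Fin (2 ^ j)) 1 : Fin (2 ^ j) → ℂ)) =
      ((Real.sqrt 2 : ℂ))⁻¹ • ((Pi.single (⟨2 ^ (j - 1) - 1, idx_a j hj⟩ : Fin (2 ^ j)) 1 : Fin (2 ^ j) → ℂ) -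
        Complex.exp (-(Complex.I * lam)) • (Pi.single (⟨2 ^ (j - 1), idx_b j hj⟩ : Fin (2 ^ j)) 1 : Fin (2 ^ j) → ℂ))) :
    NormedSpace.exp ((Complex.I * (γ * τ)) •
        (Complex.exp (Complex.I * lam) • sjm j hj +
          Complex.exp (-(Complex.I * lam)) • (sjm j hj)ᴴ)) =
      B * CRZ j hj (-(2 * γ * τ)) * Bᴴ := by
  have hpos := pow_pos' (j - 1)
  have hsplit : (2 : ℕ) ^ j = 2 * 2 ^ (j - 1) := (split_size j hj).symm
  have hab : (⟨2 ^ (j - 1) - 1, idx_a j hj⟩ : Fin (2 ^ j)) ≠ ⟨2 ^ (j - 1), idx_b j hj⟩ := by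
    simp only [ne_eq, Fin.mk.injEq]
    omega
  have hαβ : Complex.exp (Complex.I * lam) * Complex.exp (-(Complex.I * lam)) = 1 := by
    rw [← Complex.exp_add]
    simp
  have hBB : B * Bᴴ = 1 := by
    have h := Matrix.mem_unitaryGroup_iff.mp hB
    rwa [Matrix.star_eq_conjTranspose] at h
  have hstarβ : star (Complex.exp (-(Complex.I * (lam : ℂ)))) = Complex.exp (Complex.I * lam) := by
    rw [Complex.star_def, ← Complex.exp_conj]
    congr 1
    simp [_root_.map_mul, Complex.conj_I, Complex.conj_ofReal]
  have hstar2 : star (((Real.sqrt 2 : ℝ) : ℂ))⁻¹ = (((Real.sqrt 2 : ℝ) : ℂ))⁻¹ := by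
    simp [Complex.star_def, map_inv₀, Complex.conj_ofReal]
  have h2 : (((Real.sqrt 2 : ℝ) : ℂ))⁻¹ * (((Real.sqrt 2 : ℝ) : ℂ))⁻¹ = 2⁻¹ := by
    rw [← mul_inv, ← Complex.ofReal_mul, Real.mul_self_sqrt (by norm_num)]
    norm_num
  have hBS : B * Matrix.single (⟨2 ^ (j - 1) - 1, idx_a j hj⟩ : Fin (2 ^ j))
        ⟨2 ^ (j - 1) - 1, idx_a j hj⟩ (1 : ℂ) * Bᴴ =
      (2⁻¹ : ℂ) • (Matrix.single (⟨2 ^ (j - 1) - 1, idx_a j hj⟩ : Fin (2 ^ j))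
          ⟨2 ^ (j - 1) - 1, idx_a j hj⟩ (1 : ℂ) +
        Matrix.single (⟨2 ^ (j - 1), idx_b j hj⟩ : Fin (2 ^ j))
          ⟨2 ^ (j - 1), idx_b j hj⟩ (1 : ℂ) +
        Complex.exp (Complex.I * lam) •
          Matrix.single (⟨2 ^ (j - 1) - 1, idx_a j hj⟩ : Fin (2 ^ j))
            ⟨2 ^ (j - 1), idx_b j hj⟩ (1 : ℂ) +
        Complex.exp (-(Complex.I * lam)) •
          Matrix.single (⟨2 ^ (j - 1), idx_b j hj⟩ : Fin (2 ^ j))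
            ⟨2 ^ (j - 1) - 1, idx_a j hj⟩ (1 : ℂ)) := by
    have hsv : star (B.mulVec (Pi.single (⟨2 ^ (j - 1) - 1, idx_a j hj⟩ : Fin (2 ^ j)) 1)) =
        (((Real.sqrt 2 : ℝ) : ℂ))⁻¹ •
          ((Pi.single (⟨2 ^ (j - 1) - 1, idx_a j hj⟩ : Fin (2 ^ j)) 1 : Fin (2 ^ j) → ℂ) +
            Complex.exp (Complex.I * lam) •
              (Pi.single (⟨2 ^ (j - 1), idx_b j hj⟩ : Fin (2 ^ j)) 1 : Fin (2 ^ j) → ℂ)) := by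
      rw [hB0]
      funext p
      simp only [Pi.star_apply, Pi.smul_apply, Pi.add_apply, Pi.single_apply, smul_eq_mul,
        star_mul', star_add, apply_ite (star : ℂ → ℂ), star_one, star_zero, hstar2, hstarβ]
      try ring
    rw [conj_vmv, hsv, hB0, vmv_smul_left, vmv_smul_right, vmv_add_left, vmv_add_right,
      vmv_add_right, vmv_smul_left, vmv_smul_right, vmv_smul_right, vmv_smul_left,
      vmv_single, vmv_single, vmv_single, vmv_single]
    match_scalars <;>
      first
        | linear_combination h2
        | linear_combination Complex.exp (Complex.I * (lam : ℂ)) * h2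
        | linear_combination Complex.exp (-(Complex.I * (lam : ℂ))) * h2
        | linear_combination (Complex.exp (-(Complex.I * (lam : ℂ))) *
            Complex.exp (Complex.I * (lam : ℂ))) * h2 + 2⁻¹ * hαβ
  have hBT : B * Matrix.single (⟨2 ^ j - 1, idx_c j⟩ : Fin (2 ^ j))
        ⟨2 ^ j - 1, idx_c j⟩ (1 : ℂ) * Bᴴ =
      (2⁻¹ : ℂ) • (Matrix.single (⟨2 ^ (j - 1) - 1, idx_a j hj⟩ : Fin (2 ^ j))
          ⟨2 ^ (j - 1) - 1, idx_a j hj⟩ (1 : ℂ) +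
        Matrix.single (⟨2 ^ (j - 1), idx_b j hj⟩ : Fin (2 ^ j))
          ⟨2 ^ (j - 1), idx_b j hj⟩ (1 : ℂ) -
        Complex.exp (Complex.I * lam) •
          Matrix.single (⟨2 ^ (j - 1) - 1, idx_a j hj⟩ : Fin (2 ^ j))
            ⟨2 ^ (j - 1), idx_b j hj⟩ (1 : ℂ) -
        Complex.exp (-(Complex.I * lam)) •
          Matrix.single (⟨2 ^ (j - 1), idx_b j hj⟩ : Fin (2 ^ j))
            ⟨2 ^ (j - 1) - 1, idx_a j hj⟩ (1 : ℂ)) := by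
    have hsv : star (B.mulVec (Pi.single (⟨2 ^ j - 1, idx_c j⟩ : Fin (2 ^ j)) 1)) =
        (((Real.sqrt 2 : ℝ) : ℂ))⁻¹ •
          ((Pi.single (⟨2 ^ (j - 1) - 1, idx_a j hj⟩ : Fin (2 ^ j)) 1 : Fin (2 ^ j) → ℂ) -
            Complex.exp (Complex.I * lam) •
              (Pi.single (⟨2 ^ (j - 1), idx_b j hj⟩ : Fin (2 ^ j)) 1 : Fin (2 ^ j) → ℂ)) := by
      rw [hB1]
      funext p
      simp only [Pi.star_apply, Pi.smul_apply, Pi.add_apply, Pi.sub_apply, Pi.single_apply,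
        smul_eq_mul, star_mul', star_add, star_sub, apply_ite (star : ℂ → ℂ), star_one,
        star_zero, hstar2, hstarβ]
      try ring
    have hsub1 : (Pi.single (⟨2 ^ (j - 1) - 1, idx_a j hj⟩ : Fin (2 ^ j)) 1 : Fin (2 ^ j) → ℂ) -
        Complex.exp (-(Complex.I * lam)) •
          (Pi.single (⟨2 ^ (j - 1), idx_b j hj⟩ : Fin (2 ^ j)) 1 : Fin (2 ^ j) → ℂ) =
        (Pi.single (⟨2 ^ (j - 1) - 1, idx_a j hj⟩ : Fin (2 ^ j)) 1 : Fin (2 ^ j) → ℂ) +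
        (-Complex.exp (-(Complex.I * lam))) •
          (Pi.single (⟨2 ^ (j - 1), idx_b j hj⟩ : Fin (2 ^ j)) 1 : Fin (2 ^ j) → ℂ) := by
      module
    have hsub2 : (Pi.single (⟨2 ^ (j - 1) - 1, idx_a j hj⟩ : Fin (2 ^ j)) 1 : Fin (2 ^ j) → ℂ) -
        Complex.exp (Complex.I * lam) •
          (Pi.single (⟨2 ^ (j - 1), idx_b j hj⟩ : Fin (2 ^ j)) 1 : Fin (2 ^ j) → ℂ) =
        (Pi.single (⟨2 ^ (j - 1) - 1, idx_a j hj⟩ : Fin (2 ^ j)) 1 : Fin (2 ^ j) → ℂ) +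
        (-Complex.exp (Complex.I * lam)) •
          (Pi.single (⟨2 ^ (j - 1), idx_b j hj⟩ : Fin (2 ^ j)) 1 : Fin (2 ^ j) → ℂ) := by
      module
    rw [conj_vmv, hsv, hB1, hsub1, hsub2, vmv_smul_left, vmv_smul_right, vmv_add_left,
      vmv_add_right, vmv_add_right, vmv_smul_left, vmv_smul_right, vmv_smul_right,
      vmv_smul_left, vmv_single, vmv_single, vmv_single, vmv_single]
    match_scalars <;>
      first
        | linear_combination h2
        | linear_combination -(Complex.exp (Complex.I * (lam : ℂ)) * h2)
        | linear_combination -(Complex.exp (-(Complex.I * (lam : ℂ))) * h2)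
        | linear_combination (Complex.exp (-(Complex.I * (lam : ℂ))) *
            Complex.exp (Complex.I * (lam : ℂ))) * h2 + 2⁻¹ * hαβ
  have hsc : (-(((-(2 * γ * τ) : ℝ) : ℂ) / 2) * Complex.I : ℂ) = Complex.I * ((γ : ℂ) * τ) := by
    push_cast
    ring
  rw [sjm_eq j hj, std_conjTranspose, exp_M _ _ hab _ _ _ hαβ, CRZ_eq j hj, conj_expand,
    hBB, hBS, hBT, hsc]
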